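/- arXiv:2403.18404 — 3 statements merged into one kernel-verified Lean document; each statement's English description precedes it below -/
import Mathlib

section
/- Let N = E₁ ∪ … ∪ E_w, where E₁, …, E_w are pairwise disjoint spherically convex subsets of 𝕊², each with nonempty interior relative to 𝕊², and suppose N is orthogonal-pair-free. Let i ≠ j and let p be a point in the intersection of the boundaries (relative to 𝕊²) of E_i and E_j. Then the set int(N) ∪ {p} is orthogonal-pair-free, where int(N) denotes the interior of N relative to 𝕊². -/
open Metric Set MeasureTheory Filter
open scoped ENNReal Topology

noncomputable section

abbrev E3 := EuclideanSpace ℝ (Fin 3)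

/-- Real inner product on ℝ³. -/
def rinner (p q : E3) : ℝ := inner ℝ p q

/-- The unit sphere 𝕊² in ℝ³. -/
def sphere2 : Set E3 := Metric.sphere (0 : E3) 1

def northPole : E3 := EuclideanSpace.single (2 : Fin 3) (1 : ℝ)
def southPole : E3 := EuclideanSpace.single (2 : Fin 3) (-1 : ℝ)

/-- Geodesic distance on the sphere: d(p,q) = arccos⟨p,q⟩. -/
def gdist (p q : E3) : ℝ := Real.arccos (rinner p q)

/-- Geodesic distance from a point to a set. -/
def gdistToSet (y : E3) (B : Set E3) : ℝ := sInf (gdist y '' B)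

/-- Open geodesic cap/ball of radius r centered at p. -/
def cap (p : E3) (r : ℝ) : Set E3 := {q ∈ sphere2 | gdist p q < r}

/-- A set is orthogonal-pair-free if no two distinct points of it are orthogonal. -/
def OPF (A : Set E3) : Prop :=
  ∀ p ∈ A, ∀ q ∈ A, p ≠ q → rinner p q ≠ 0

/-- The minor great-circle arc arc(x,y) = {u/‖u‖ : u ∈ [x,y]}. -/
def arc (x y : E3) : Set E3 := (fun u : E3 => ‖u‖⁻¹ • u) '' segment ℝ x y

/-- Spherical convexity. -/
def SphConvex (S : Set E3) : Prop :=
  ∀ x ∈ S, ∀ y ∈ S, x ≠ -y → arc x y ⊆ S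

/-- The surface measure σ on 𝕊² (2-dimensional Hausdorff measure, σ(𝕊²) = 4π). -/
def sigmaM : Measure E3 := MeasureTheory.Measure.hausdorffMeasure 2

/-- The normalized surface measure μ, μ(𝕊²) = 1. -/
def muS : Measure E3 := (ENNReal.ofReal (4 * Real.pi))⁻¹ • sigmaM

/-- 𝒜: orthogonal-pair-free subsets of 𝕊² that are finite unions of pairwise
mutually disjoint (disjoint closures) spherically convex sets. -/
def memA (S : Set E3) : Prop :=
  S ⊆ sphere2 ∧ OPF S ∧
  ∃ (n : ℕ) (C : Fin n → Set E3),
    (∀ i, C i ⊆ sphere2 ∧ SphConvex (C i)) ∧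
    (Pairwise fun i j => closure (C i) ∩ closure (C j) = ∅) ∧
    S = ⋃ i, C i

/-- 𝒜ₖ: as 𝒜 but with at most k convex pieces. -/
def memAk (k : ℕ) (S : Set E3) : Prop :=
  S ⊆ sphere2 ∧ OPF S ∧
  ∃ n : ℕ, n ≤ k ∧ ∃ C : Fin n → Set E3,
    (∀ i, C i ⊆ sphere2 ∧ SphConvex (C i)) ∧
    (Pairwise fun i j => closure (C i) ∩ closure (C j) = ∅) ∧
    S = ⋃ i, C i

/-- Azimuthal angle of the (p₁,p₂) components of a point. -/
def azimuth (p : E3) : ℝ := Complex.arg ((p 0 : ℂ) + (p 1 : ℂ) * Complex.I)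

/-- The azimuthal angle lies in [a,b] modulo 2π. -/
def azIn (p : E3) (a b : ℝ) : Prop :=
  ∃ m : ℤ, a ≤ azimuth p + 2 * Real.pi * (m : ℝ) ∧ azimuth p + 2 * Real.pi * (m : ℝ) ≤ b

/-- The level-k dyadic cell with indices i, j. -/
def dyadicCell (k i j : ℕ) : Set E3 :=
  {p ∈ sphere2 |
    ((i : ℝ) * (2 : ℝ)⁻¹ ^ k - 1 ≤ p 2 ∧ p 2 ≤ ((i : ℝ) + 1) * (2 : ℝ)⁻¹ ^ k - 1) ∧
    azIn p (Real.pi / 2 + (j : ℝ) * Real.pi * (2 : ℝ)⁻¹ ^ k)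
           (Real.pi / 2 + ((j : ℝ) + 1) * Real.pi * (2 : ℝ)⁻¹ ^ k)}

/-- c is a level-k dyadic cell. -/
def IsDyadicCell (k : ℕ) (c : Set E3) : Prop :=
  ∃ i j : ℕ, i < 2 ^ (k + 1) ∧ j < 2 ^ (k + 1) ∧ c = dyadicCell k i j

/-- Interior of c relative to 𝕊². -/
def relInterior (c : Set E3) : Set E3 :=
  {x ∈ sphere2 | ∃ U : Set E3, IsOpen U ∧ x ∈ U ∧ U ∩ sphere2 ⊆ c}

/-- Boundary of c relative to 𝕊². -/
def relBd (c : Set E3) : Set E3 := closure c ∩ closure (sphere2 \ c)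

/-- ℬ: orthogonal-pair-free finite unions of pairwise almost disjoint dyadic cells. -/
def memB (S : Set E3) : Prop :=
  OPF S ∧
  ∃ (n : ℕ) (lev : Fin n → ℕ) (c : Fin n → Set E3),
    (∀ i, IsDyadicCell (lev i) (c i)) ∧
    (Pairwise fun i j => relInterior (c i) ∩ relInterior (c j) = ∅) ∧
    S = ⋃ i, c i

/-- The great circle polar to y. -/
def polarGC (y : E3) : Set E3 := {z ∈ sphere2 | rinner y z = 0}

/-- G(M) = ⋃_{y ∈ M} G(y). -/
def GM (M : Set E3) : Set E3 := ⋃ y ∈ M, polarGC y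

/-- M₁ = {z ∈ 𝕊² : G(z) ⊆ G(M)}. -/
def Mone (M : Set E3) : Set E3 := {z ∈ sphere2 | polarGC z ⊆ GM M}

/-- M₂ = M₁ \ G(M). -/
def Mtwo (M : Set E3) : Set E3 := Mone M \ GM M

/-- x ∼ y: joined by a finite piecewise-geodesic path inside A. -/
def chainRel (A : Set E3) (x y : E3) : Prop :=
  ∃ (m : ℕ) (s : ℕ → E3), s 0 = x ∧ s m = y ∧
    ∀ l, l < m → s l ≠ -s (l + 1) ∧ arc (s l) (s (l + 1)) ⊆ A

/-- Hausdorff distance with respect to the geodesic metric. -/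
def geoHausdorff (U V : Set E3) : ℝ :=
  max (⨆ x ∈ U, gdistToSet x V) (⨆ y ∈ V, gdistToSet y U)

/-- Geodesic distance between two sets. -/
def gsetDist (A B : Set E3) : ℝ := sInf (Set.image2 gdist A B)


lemma relInterior_subset' (N : Set E3) : relInterior N ⊆ N := by
  rintro x ⟨hxS, U, hUo, hxU, hUsub⟩
  exact hUsub ⟨hxU, hxS⟩

lemma key_lemma (N : Set E3) (hNs : N ⊆ sphere2) (hOPF : OPF N)
    (p q : E3) (hp : p ∈ closure N) (hq : q ∈ relInterior N)
    (h0 : (inner ℝ q p : ℝ) = 0) : False := by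
  obtain ⟨hqS, U, hUo, hqU, hUsub⟩ := hq
  have hq1 : ‖q‖ = 1 := mem_sphere_zero_iff_norm.mp hqS
  obtain ⟨ε, hε, hball⟩ := Metric.isOpen_iff.mp hUo q hqU
  set f : E3 → E3 := fun v => ‖q - (inner ℝ q v : ℝ) • v‖⁻¹ • (q - (inner ℝ q v : ℝ) • v)
    with hf
  have hg : Continuous (fun v : E3 => q - (inner ℝ q v : ℝ) • v) :=
    continuous_const.sub ((continuous_const.inner (𝕜 := ℝ) continuous_id).smul continuous_id)
  have hfp : f p = q := by
    show ‖q - (inner ℝ q p : ℝ) • p‖⁻¹ • (q - (inner ℝ q p : ℝ) • p) = q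
    rw [h0, zero_smul, sub_zero, hq1]; norm_num
  have hcont : ContinuousAt f p := by
    refine ContinuousAt.smul (f := fun v => ‖q - (inner ℝ q v : ℝ) • v‖⁻¹) (g := fun v => q - (inner ℝ q v : ℝ) • v) ?_ ?_
    · apply ContinuousAt.inv₀ hg.norm.continuousAt
      show ‖q - (inner ℝ q p : ℝ) • p‖ ≠ 0
      rw [h0, zero_smul, sub_zero, hq1]; norm_num
    · exact hg.continuousAt
  obtain ⟨δ, hδ, hδprop⟩ := Metric.continuousAt_iff.mp hcont ε hε
  have hδ' : 0 < min δ (1/2) := lt_min hδ (by norm_num)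
  obtain ⟨p', hp'N, hpp'⟩ := Metric.mem_closure_iff.mp hp _ hδ'
  have hp1 : ‖p'‖ = 1 := mem_sphere_zero_iff_norm.mp (hNs hp'N)
  have hpp : (inner ℝ p' p' : ℝ) = 1 := by
    rw [real_inner_self_eq_norm_mul_norm, hp1]; ring
  set c : ℝ := inner ℝ q p' with hcdef
  have hc : |c| < 1/2 := by
    have h1 : c = inner ℝ q (p' - p) := by rw [inner_sub_right, h0, sub_zero]
    calc |c| = |(inner ℝ q (p' - p) : ℝ)| := by rw [h1]
      _ ≤ ‖q‖ * ‖p' - p‖ := abs_real_inner_le_norm _ _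
      _ = ‖p' - p‖ := by rw [hq1, one_mul]
      _ = dist p p' := by rw [dist_eq_norm, norm_sub_rev]
      _ < min δ (1/2) := hpp'
      _ ≤ 1/2 := min_le_right _ _
  set w : E3 := q - c • p' with hwdef
  have hw2 : ‖w‖ ^ 2 = 1 - c ^ 2 := by
    rw [← real_inner_self_eq_norm_sq, hwdef]
    have hqq : (inner ℝ q q : ℝ) = 1 := by
      rw [real_inner_self_eq_norm_mul_norm, hq1]; ring
    have hcomm : (inner ℝ p' q : ℝ) = c := (real_inner_comm p' q).symm.trans hcdef.symm
    rw [inner_sub_left, inner_sub_right, inner_sub_right, real_inner_smul_left,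
      real_inner_smul_left, real_inner_smul_right, real_inner_smul_right,
      hqq, hpp, hcomm, ← hcdef]
    ring
  have hwpos : 0 < ‖w‖ := by
    have : 0 < ‖w‖ ^ 2 := by
      rw [hw2]
      nlinarith [abs_nonneg c, sq_abs c]
    nlinarith [norm_nonneg w]
  have hwne : ‖w‖ ≠ 0 := ne_of_gt hwpos
  have hq'1 : ‖f p'‖ = 1 := by
    rw [hf]
    simp only [← hcdef, ← hwdef, norm_smul, norm_inv, norm_norm]
    exact inv_mul_cancel₀ hwne
  have hq'S : f p' ∈ sphere2 := mem_sphere_zero_iff_norm.mpr hq'1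
  have hq'U : f p' ∈ U := by
    apply hball
    have hd : dist p' p < δ := lt_of_lt_of_le (by rw [dist_comm]; exact hpp') (min_le_left _ _)
    have := hδprop hd
    rw [hfp] at this
    exact this
  have hq'N : f p' ∈ N := hUsub ⟨hq'U, hq'S⟩
  have hiq' : (inner ℝ (f p') p' : ℝ) = 0 := by
    rw [hf]
    simp only [← hcdef, ← hwdef, real_inner_smul_left]
    rw [hwdef, inner_sub_left, real_inner_smul_left, hpp, ← hcdef]
    ring
  have hne : f p' ≠ p' := by
    intro h
    rw [h, hpp] at hiq'
    norm_num at hiq'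
  exact hOPF (f p') hq'N p' hp'N hne hiq'

/-- adding a common boundary point of two components to int(N)
preserves orthogonal-pair-freeness. -/
theorem stmt16 (w : ℕ) (Ee : Fin w → Set E3)
    (hconv : ∀ i, Ee i ⊆ sphere2 ∧ SphConvex (Ee i) ∧ (relInterior (Ee i)).Nonempty)
    (hdisj : Pairwise fun i j => Ee i ∩ Ee j = ∅)
    (hOPF : OPF (⋃ i, Ee i))
    (i j : Fin w) (hij : i ≠ j)
    (p : E3) (hp : p ∈ relBd (Ee i) ∩ relBd (Ee j)) :
    OPF (relInterior (⋃ i, Ee i) ∪ {p}) := by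
  have hNs : (⋃ k, Ee k) ⊆ sphere2 := iUnion_subset fun k => (hconv k).1
  have hpcl : p ∈ closure (⋃ k, Ee k) :=
    closure_mono (subset_iUnion Ee i) hp.1.1
  intro a ha b hb hab h0
  rcases ha with ha | ha <;> rcases hb with hb | hb
  · exact hOPF a (relInterior_subset' _ ha) b (relInterior_subset' _ hb) hab h0
  · rw [mem_singleton_iff] at hb
    subst hb
    exact key_lemma _ hNs hOPF b a hpcl ha h0
  · rw [mem_singleton_iff] at ha
    subst ha
    have h0' : (inner ℝ b a : ℝ) = 0 := by rw [real_inner_comm]; exact h0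
    exact key_lemma _ hNs hOPF a b hpcl hb h0'
  · rw [mem_singleton_iff] at ha hb
    exact hab (ha.trans hb.symm)

end
end

section
/- Let N₁ ⊆ 𝕊² be an orthogonal-pair-free set that is a union of w pairwise disjoint spherically convex sets. Then there exists an orthogonal-pair-free set N₂ ⊆ 𝕊² that is a union of w' pairwise disjoint spherically convex sets for some 1 ≤ w' ≤ w, such that the geodesic distance between any two of these w' convex sets is strictly positive, and μ(N₂) ≥ μ(N₁). -/
open Metric Set MeasureTheory Filter
open scoped ENNReal Topology

noncomputable section

namespace Stmt17Aux

open scoped RealInnerProductSpace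

lemma rinner_eq (p q : E3) : rinner p q = ⟪p, q⟫ := rfl

lemma mem_sphere2_iff {p : E3} : p ∈ sphere2 ↔ ‖p‖ = 1 := mem_sphere_zero_iff_norm

lemma rinner_self {p : E3} (hp : p ∈ sphere2) : rinner p p = 1 := by
  rw [rinner_eq, real_inner_self_eq_norm_sq, mem_sphere2_iff.1 hp]; norm_num

lemma rinner_comm (p q : E3) : rinner p q = rinner q p := by
  unfold rinner; exact real_inner_comm q p

lemma rinner_le_one {p q : E3} (hp : p ∈ sphere2) (hq : q ∈ sphere2) : rinner p q ≤ 1 := by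
  have := real_inner_le_norm p q
  rw [mem_sphere2_iff.1 hp, mem_sphere2_iff.1 hq] at this
  simpa [rinner_eq] using this

lemma neg_one_le_rinner {p q : E3} (hp : p ∈ sphere2) (hq : q ∈ sphere2) : -1 ≤ rinner p q := by
  have := abs_real_inner_le_norm p q
  rw [mem_sphere2_iff.1 hp, mem_sphere2_iff.1 hq] at this
  have := neg_le_of_abs_le (by simpa using this)
  simpa [rinner_eq] using this

lemma gdist_nonneg' (p q : E3) : 0 ≤ gdist p q := Real.arccos_nonneg _

/-- Spherical hull: normalized convex hull. -/
def sphHull (S : Set E3) : Set E3 := (fun u : E3 => ‖u‖⁻¹ • u) '' (convexHull ℝ S)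

lemma hull_inner_pos {S : Set E3} (h : ∀ a ∈ S, ∀ b ∈ S, 0 < rinner a b) :
    ∀ u ∈ convexHull ℝ S, ∀ v ∈ convexHull ℝ S, 0 < ⟪u, v⟫ := by
  have step1 : ∀ a ∈ S, ∀ v ∈ convexHull ℝ S, 0 < ⟪a, v⟫ := by
    intro a ha
    have hl : IsLinearMap ℝ (fun v : E3 => ⟪a, v⟫) :=
      ⟨fun x y => inner_add_right a x y, fun c x => real_inner_smul_right a x c⟩
    have hconv : Convex ℝ {v : E3 | 0 < ⟪a, v⟫} := convex_halfSpace_gt hl 0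
    intro v hv
    exact convexHull_min (fun b hb => h a ha b hb) hconv hv
  intro u hu v hv
  have hl : IsLinearMap ℝ (fun w : E3 => ⟪w, v⟫) :=
    ⟨fun x y => inner_add_left x y v, fun c x => real_inner_smul_left x v c⟩
  have hconv : Convex ℝ {w : E3 | 0 < ⟪w, v⟫} := convex_halfSpace_gt hl 0
  exact convexHull_min (fun a ha => step1 a ha v hv) hconv hu

lemma hull_ne_zero {S : Set E3} (h : ∀ a ∈ S, ∀ b ∈ S, 0 < rinner a b)
    {u : E3} (hu : u ∈ convexHull ℝ S) : u ≠ 0 := by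
  intro h0
  have := hull_inner_pos h u hu u hu
  rw [h0] at this
  simp at this

lemma norm_smul_self {a : E3} (ha : a ∈ sphere2) : ‖a‖⁻¹ • a = a := by
  rw [mem_sphere2_iff.1 ha]; simp

lemma subset_sphHull {S : Set E3} (hS : S ⊆ sphere2) : S ⊆ sphHull S := by
  intro a ha
  exact ⟨a, subset_convexHull ℝ S ha, norm_smul_self (hS ha)⟩

lemma sphHull_subset_sphere {S : Set E3} (h : ∀ a ∈ S, ∀ b ∈ S, 0 < rinner a b) :
    sphHull S ⊆ sphere2 := by
  rintro _ ⟨u, hu, rfl⟩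
  have hu0 : u ≠ 0 := hull_ne_zero h hu
  rw [mem_sphere2_iff]
  show ‖‖u‖⁻¹ • u‖ = 1
  rw [norm_smul]
  simp [inv_mul_cancel₀ (norm_ne_zero_iff.2 hu0), abs_of_nonneg (inv_nonneg.2 (norm_nonneg u))]

lemma sphHull_inner_pos {S : Set E3} (h : ∀ a ∈ S, ∀ b ∈ S, 0 < rinner a b) :
    ∀ x ∈ sphHull S, ∀ y ∈ sphHull S, 0 < rinner x y := by
  rintro _ ⟨u, hu, rfl⟩ _ ⟨v, hv, rfl⟩
  have hu0 : (0:ℝ) < ‖u‖ := norm_pos_iff.2 (hull_ne_zero h hu)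
  have hv0 : (0:ℝ) < ‖v‖ := norm_pos_iff.2 (hull_ne_zero h hv)
  have hp := hull_inner_pos h u hu v hv
  show 0 < ⟪‖u‖⁻¹ • u, ‖v‖⁻¹ • v⟫
  rw [real_inner_smul_left, real_inner_smul_right]
  positivity

lemma sphHull_inner_sign_pos {S : Set E3} (h : ∀ a ∈ S, ∀ b ∈ S, 0 < rinner a b)
    {q : E3} (hq : ∀ a ∈ S, 0 < rinner q a) : ∀ x ∈ sphHull S, 0 < rinner q x := by
  rintro _ ⟨u, hu, rfl⟩
  have hu0 : (0:ℝ) < ‖u‖ := norm_pos_iff.2 (hull_ne_zero h hu)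
  have hpos : 0 < ⟪q, u⟫ := by
    have hl : IsLinearMap ℝ (fun v : E3 => ⟪q, v⟫) :=
      ⟨fun x y => inner_add_right q x y, fun c x => real_inner_smul_right q x c⟩
    have hconv : Convex ℝ {v : E3 | 0 < ⟪q, v⟫} := convex_halfSpace_gt hl 0
    exact convexHull_min (fun a ha => hq a ha) hconv hu
  show 0 < ⟪q, ‖u‖⁻¹ • u⟫
  rw [real_inner_smul_right]
  positivity

lemma sphHull_inner_sign_neg {S : Set E3} (h : ∀ a ∈ S, ∀ b ∈ S, 0 < rinner a b)
    {q : E3} (hq : ∀ a ∈ S, rinner q a < 0) : ∀ x ∈ sphHull S, rinner q x < 0 := by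
  rintro _ ⟨u, hu, rfl⟩
  have hu0 : (0:ℝ) < ‖u‖ := norm_pos_iff.2 (hull_ne_zero h hu)
  have hneg : ⟪q, u⟫ < 0 := by
    have hl : IsLinearMap ℝ (fun v : E3 => ⟪q, v⟫) :=
      ⟨fun x y => inner_add_right q x y, fun c x => real_inner_smul_right q x c⟩
    have hconv : Convex ℝ {v : E3 | ⟪q, v⟫ < 0} := convex_halfSpace_lt hl 0
    exact convexHull_min (fun a ha => hq a ha) hconv hu
  show ⟪q, ‖u‖⁻¹ • u⟫ < 0
  rw [real_inner_smul_right]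
  have h1 : (0:ℝ) < ‖u‖⁻¹ := by positivity
  nlinarith

lemma sphConvex_sphHull {S : Set E3} (h : ∀ a ∈ S, ∀ b ∈ S, 0 < rinner a b) :
    SphConvex (sphHull S) := by
  rintro x ⟨u, hu, rfl⟩ y ⟨v, hv, rfl⟩ _ _ ⟨m, hm, rfl⟩
  obtain ⟨c, c', hc, hc', hsum, rfl⟩ := hm
  have hu0 : (0:ℝ) < ‖u‖ := norm_pos_iff.2 (hull_ne_zero h hu)
  have hv0 : (0:ℝ) < ‖v‖ := norm_pos_iff.2 (hull_ne_zero h hv)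
  set α := c * ‖u‖⁻¹ with hα
  set β := c' * ‖v‖⁻¹ with hβ
  have hαnn : 0 ≤ α := by positivity
  have hβnn : 0 ≤ β := by positivity
  have hs : 0 < α + β := by
    rcases lt_or_ge 0 c with hcpos | hcle
    · have : 0 < α := by positivity
      linarith
    · have hc0 : c = 0 := le_antisymm hcle hc
      have hc1 : c' = 1 := by linarith
      have : 0 < β := by rw [hβ, hc1, one_mul]; positivity
      linarith
  set s := α + β with hsdef
  set z := (α / s) • u + (β / s) • v with hzdef
  have hz : z ∈ convexHull ℝ S :=
    (convex_convexHull ℝ S) hu hv (by positivity) (by positivity) (by field_simp; exact hsdef.symm)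
  have hsa : s * (α / s) = α := by field_simp
  have hsb : s * (β / s) = β := by field_simp
  have hm_eq : c • (‖u‖⁻¹ • u) + c' • (‖v‖⁻¹ • v) = s • z := by
    rw [hzdef, smul_add, smul_smul, smul_smul, smul_smul, smul_smul, hsa, hsb]
  rw [hm_eq]
  have hz0 : z ≠ 0 := hull_ne_zero h hz
  have hnz : (0:ℝ) < ‖z‖ := norm_pos_iff.2 hz0
  refine ⟨z, hz, ?_⟩
  show ‖z‖⁻¹ • z = ‖s • z‖⁻¹ • s • z
  rw [norm_smul, Real.norm_eq_abs, abs_of_pos hs, smul_smul, mul_inv]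
  congr 1
  field_simp

end Stmt17Aux
namespace Stmt17Aux

open scoped RealInnerProductSpace

lemma comb_inner_self {x y : E3} (hx : x ∈ sphere2) (hy : y ∈ sphere2) (a b : ℝ) :
    ⟪a • x + b • y, a • x + b • y⟫ = a ^ 2 + b ^ 2 + 2 * (a * b) * ⟪x, y⟫ := by
  have hxx : ⟪x, x⟫ = 1 := rinner_self hx
  have hyy : ⟪y, y⟫ = 1 := rinner_self hy
  have hyx : ⟪y, x⟫ = ⟪x, y⟫ := real_inner_comm x y
  rw [inner_add_add_self]
  simp only [real_inner_smul_left, real_inner_smul_right, hxx, hyy, hyx]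
  ring

lemma comb_ne_zero {x y : E3} (hx : x ∈ sphere2) (hy : y ∈ sphere2)
    (hxy : 0 < rinner x y) {a b : ℝ} (ha : 0 ≤ a) (hb : 0 ≤ b) (hab : a ^ 2 + b ^ 2 ≠ 0) :
    a • x + b • y ≠ 0 := by
  intro h0
  have h := comb_inner_self hx hy a b
  rw [h0] at h
  simp only [inner_zero_left] at h
  have hxy' : 0 < ⟪x, y⟫ := hxy
  have ha2 : 0 ≤ a ^ 2 := sq_nonneg a
  have hb2 : 0 ≤ b ^ 2 := sq_nonneg b
  nlinarith [lt_of_le_of_ne (by positivity : (0:ℝ) ≤ a ^ 2 + b ^ 2) (Ne.symm hab),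
    mul_nonneg (mul_nonneg ha hb) (le_of_lt hxy')]

lemma isPreconnected_of_sphConvex {C : Set E3} (hC : C ⊆ sphere2) (hconv : SphConvex C)
    (hpos : ∀ a ∈ C, ∀ b ∈ C, 0 < rinner a b) : IsPreconnected C := by
  rcases eq_empty_or_nonempty C with rfl | ⟨x₀, hx₀⟩
  · exact isPreconnected_empty
  have hjoin : ∀ x ∈ C, ∀ y ∈ C, JoinedIn C x y := by
    intro x hx y hy
    have hxney : x ≠ -y := by
      intro h
      have h2 := hpos x hx y hy
      rw [h, rinner_eq, inner_neg_left] at h2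
      have h3 : ⟪y, y⟫ = 1 := rinner_self (hC hy)
      rw [h3] at h2
      linarith
    have harc : arc x y ⊆ C := hconv x hx y hy hxney
    set f : unitInterval → E3 := fun t => ((1:ℝ) - (t:ℝ)) • x + (t:ℝ) • y with hf
    have hne : ∀ t : unitInterval, f t ≠ 0 := by
      intro t
      refine comb_ne_zero (hC hx) (hC hy) (hpos x hx y hy) (by simpa using t.2.2) t.2.1 ?_
      intro hz
      have h1 : ((1:ℝ) - (t:ℝ)) ^ 2 = 0 ∧ ((t:ℝ)) ^ 2 = 0 := by
        constructor <;> nlinarith [sq_nonneg ((1:ℝ) - (t:ℝ)), sq_nonneg ((t:ℝ))]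
      have h2 : (t:ℝ) = 0 := by
        have := h1.2; nlinarith
      have h3 : (1:ℝ) - (t:ℝ) = 0 := by
        have := h1.1; nlinarith
      rw [h2] at h3; norm_num at h3
    have hcont : Continuous f := by
      exact ((continuous_const.sub continuous_subtype_val).smul continuous_const).add
        (continuous_subtype_val.smul continuous_const)
    have hmem : ∀ t : unitInterval, ‖f t‖⁻¹ • f t ∈ C := by
      intro t
      apply harc
      exact ⟨f t, ⟨1 - (t:ℝ), (t:ℝ), by simpa using t.2.2, t.2.1, by ring, rfl⟩, rfl⟩
    refine ⟨⟨⟨fun t => ‖f t‖⁻¹ • f t, ?_⟩, ?_, ?_⟩, fun t => hmem t⟩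
    · exact ((hcont.norm.inv₀ (fun t => norm_ne_zero_iff.2 (hne t))).smul hcont)
    · show ‖f 0‖⁻¹ • f 0 = x
      have : f 0 = x := by simp [hf]
      rw [this, norm_smul_self (hC hx)]
    · show ‖f 1‖⁻¹ • f 1 = y
      have : f 1 = y := by simp [hf]
      rw [this, norm_smul_self (hC hy)]
  exact (IsPathConnected.isConnected ⟨x₀, hx₀, fun y hy => hjoin x₀ hx₀ y hy⟩).isPreconnected

/-- Sign constancy of the inner product on a product of preconnected sets. -/
lemma sign_const {A B : Set E3} (hA : IsPreconnected A) (hB : IsPreconnected B)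
    (hne : ∀ a ∈ A, ∀ b ∈ B, rinner a b ≠ 0) :
    (∀ a ∈ A, ∀ b ∈ B, 0 < rinner a b) ∨ (∀ a ∈ A, ∀ b ∈ B, rinner a b < 0) := by
  rcases eq_empty_or_nonempty A with rfl | ⟨a₀, ha₀⟩
  · left; simp
  rcases eq_empty_or_nonempty B with rfl | ⟨b₀, hb₀⟩
  · left; simp
  have hprod : IsPreconnected (A ×ˢ B) := hA.prod hB
  have hcont : ContinuousOn (fun p : E3 × E3 => ⟪p.1, p.2⟫) (A ×ˢ B) :=
    continuous_inner.continuousOn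
  have himg : IsPreconnected ((fun p : E3 × E3 => ⟪p.1, p.2⟫) '' (A ×ˢ B)) :=
    hprod.image _ hcont
  have hoc := himg.ordConnected
  have key : ∀ u ∈ A, ∀ v ∈ B, ∀ u' ∈ A, ∀ v' ∈ B,
      0 < rinner u v → rinner u' v' < 0 → False := by
    intro u hu v hv u' hu' v' hv' huv h1
    have hm1 : (⟪u', v'⟫ : ℝ) ∈ (fun p : E3 × E3 => ⟪p.1, p.2⟫) '' (A ×ˢ B) :=
      ⟨(u', v'), ⟨hu', hv'⟩, rfl⟩
    have hm2 : (⟪u, v⟫ : ℝ) ∈ (fun p : E3 × E3 => ⟪p.1, p.2⟫) '' (A ×ˢ B) :=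
      ⟨(u, v), ⟨hu, hv⟩, rfl⟩
    have h0 : (0:ℝ) ∈ (fun p : E3 × E3 => ⟪p.1, p.2⟫) '' (A ×ˢ B) :=
      hoc.out hm1 hm2 ⟨le_of_lt h1, le_of_lt huv⟩
    obtain ⟨⟨a, b⟩, ⟨ha, hb⟩, hab⟩ := h0
    exact hne a ha b hb hab
  rcases lt_or_gt_of_ne (hne a₀ ha₀ b₀ hb₀) with hneg | hposi
  · right
    intro a ha b hb
    by_contra hge
    have hgt : 0 < rinner a b := lt_of_le_of_ne (not_lt.1 hge) (Ne.symm (hne a ha b hb))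
    exact key a ha b hb a₀ ha₀ b₀ hb₀ hgt hneg
  · left
    intro a ha b hb
    by_contra hge
    have hlt : rinner a b < 0 := lt_of_le_of_ne (not_lt.1 hge) (hne a ha b hb)
    exact key a₀ ha₀ b₀ hb₀ a ha b hb hposi hlt

end Stmt17Aux
set_option maxHeartbeats 1000000

namespace Stmt17Aux

open scoped RealInnerProductSpace

lemma sigma_singleton_null (x : E3) : sigmaM {x} = 0 := by
  apply hausdorffMeasure_of_dimH_lt (d := 2)
  rw [Set.Subsingleton.dimH_zero subsingleton_singleton]
  norm_num

lemma sigma_pair_null (x y : E3) : sigmaM {x, y} = 0 := by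
  have : ({x, y} : Set E3) = {x} ∪ {y} := rfl
  rw [this]
  refine le_antisymm (le_trans (measure_union_le _ _) ?_) (zero_le)
  rw [sigma_singleton_null, sigma_singleton_null]
  simp

lemma polar_circle_null {p : E3} (hp : ‖p‖ = 1) :
    sigmaM {z : E3 | ‖z‖ = 1 ∧ ⟪p, z⟫ = 0} = 0 := by
  have hp0 : p ≠ 0 := by intro h; rw [h] at hp; simp at hp
  haveI : Fact (Module.finrank ℝ E3 = 2 + 1) := ⟨by simp [finrank_euclideanSpace_fin]⟩
  set K := (Submodule.span ℝ {p})ᗮ with hKdef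
  have hK : Module.finrank ℝ K = 2 := Submodule.finrank_orthogonal_span_singleton hp0
  set b := (stdOrthonormalBasis ℝ K).reindex (finCongr hK) with hb
  set e0 : E3 := (b 0 : E3) with he0
  set e1 : E3 := (b 1 : E3) with he1
  have hne0 : ‖e0‖ = 1 := b.orthonormal.1 0
  have hne1 : ‖e1‖ = 1 := b.orthonormal.1 1
  set γ : ℝ → E3 := fun t => Real.cos t • e0 + Real.sin t • e1 with hγ
  have hlip : LipschitzWith 2 γ := by
    have hderiv : ∀ t : ℝ, HasDerivAt γ ((-Real.sin t) • e0 + Real.cos t • e1) t := by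
      intro t
      exact ((Real.hasDerivAt_cos t).smul_const e0).add ((Real.hasDerivAt_sin t).smul_const e1)
    apply lipschitzWith_of_nnnorm_deriv_le (fun t => (hderiv t).differentiableAt)
    intro t
    rw [(hderiv t).deriv]
    rw [← NNReal.coe_le_coe, coe_nnnorm]
    calc ‖(-Real.sin t) • e0 + Real.cos t • e1‖
        ≤ ‖(-Real.sin t) • e0‖ + ‖Real.cos t • e1‖ := norm_add_le _ _
      _ = |Real.sin t| + |Real.cos t| := by
          rw [norm_smul, norm_smul, hne0, hne1, Real.norm_eq_abs, Real.norm_eq_abs]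
          simp
      _ ≤ 1 + 1 := add_le_add (Real.abs_sin_le_one t) (Real.abs_cos_le_one t)
      _ = ((2 : NNReal) : ℝ) := by norm_num
  have himg : sigmaM (γ '' Set.univ) = 0 := by
    apply hausdorffMeasure_of_dimH_lt (d := 2)
    calc dimH (γ '' Set.univ) ≤ dimH (Set.univ : Set ℝ) := hlip.dimH_image_le _
      _ = 1 := Real.dimH_univ
      _ < 2 := by norm_num
  refine le_antisymm (le_trans (measure_mono ?_) (le_of_eq himg)) (zero_le)
  rintro z ⟨hz1, hz2⟩
  have hzK : z ∈ K := Submodule.mem_orthogonal_singleton_iff_inner_right.2 hz2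
  set zK : K := ⟨z, hzK⟩ with hzKdef
  set c : Fin 2 → ℝ := fun i => b.repr zK i with hc
  have hsum : c 0 • (b 0) + c 1 • (b 1) = zK := by
    have := b.sum_repr zK
    rwa [Fin.sum_univ_two] at this
  have hnorm2 : c 0 ^ 2 + c 1 ^ 2 = 1 := by
    have h1 : ‖b.repr zK‖ = 1 := by
      rw [LinearIsometryEquiv.norm_map]
      show ‖z‖ = 1
      exact hz1
    rw [EuclideanSpace.norm_eq] at h1
    have h2 : ∑ i : Fin 2, ‖b.repr zK i‖ ^ 2 = 1 := by
      have hnn : 0 ≤ ∑ i : Fin 2, ‖b.repr zK i‖ ^ 2 := by positivity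
      nlinarith [Real.sq_sqrt hnn, h1]
    rw [Fin.sum_univ_two] at h2
    simpa [Real.norm_eq_abs, sq_abs] using h2
  set w : ℂ := ⟨c 0, c 1⟩ with hw
  have habs : ‖w‖ = 1 := by
    rw [Complex.norm_def, Complex.normSq_mk]
    rw [show c 0 * c 0 + c 1 * c 1 = 1 by nlinarith]
    exact Real.sqrt_one
  have hw0 : w ≠ 0 := by
    intro h; rw [h] at habs; simp at habs
  refine ⟨Complex.arg w, Set.mem_univ _, ?_⟩
  have hcos : Real.cos (Complex.arg w) = c 0 := by
    rw [Complex.cos_arg hw0, habs]; simp [hw]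
  have hsin : Real.sin (Complex.arg w) = c 1 := by
    rw [Complex.sin_arg, habs]; simp [hw]
  show Real.cos (Complex.arg w) • e0 + Real.sin (Complex.arg w) • e1 = z
  rw [hcos, hsin]
  have := congrArg (Subtype.val : K → E3) hsum
  simpa using this

end Stmt17Aux
namespace Stmt17Aux

open scoped RealInnerProductSpace

lemma gdist_comm (a b : E3) : gdist a b = gdist b a := by
  unfold gdist; rw [rinner_comm]

lemma rinner_gt_of_gdist_lt {a b : E3} (ha : a ∈ sphere2) (hb : b ∈ sphere2)
    {δ : ℝ} (hδπ : δ ≤ Real.pi) (h : gdist a b < δ) : Real.cos δ < rinner a b := by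
  have h1 : Real.cos δ < Real.cos (gdist a b) :=
    Real.cos_lt_cos_of_nonneg_of_le_pi (gdist_nonneg' a b) hδπ h
  rwa [gdist, Real.cos_arccos (neg_one_le_rinner ha hb) (rinner_le_one ha hb)] at h1

lemma one_div_le_pi (n : ℕ) : (1:ℝ) / (n + 1) ≤ Real.pi := by
  have h1 : (1:ℝ)/(n+1) ≤ 1 := by
    rw [div_le_one (by positivity)]
    linarith [Nat.cast_nonneg (α := ℝ) n]
  linarith [Real.pi_gt_three]

lemma close_pairs {A B : Set E3} (hAne : A.Nonempty) (hBne : B.Nonempty)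
    (hd : gsetDist A B ≤ 0) : ∀ n : ℕ, ∃ a ∈ A, ∃ b ∈ B, gdist a b < 1 / (n + 1) := by
  intro n
  by_contra hcon
  push_neg at hcon
  have hle : (1 : ℝ) / (n + 1) ≤ gsetDist A B := by
    apply le_csInf
    · obtain ⟨a, ha⟩ := hAne; obtain ⟨b, hb⟩ := hBne
      exact ⟨gdist a b, Set.mem_image2_of_mem ha hb⟩
    · rintro _ ⟨a, ha, b, hb, rfl⟩
      exact hcon a ha b hb
  have hpos : (0:ℝ) < 1 / (n + 1) := by positivity
  linarith

lemma norm_sub_le_of_close {a b : E3} (ha : a ∈ sphere2) (hb : b ∈ sphere2)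
    {n : ℕ} (h : gdist a b < 1 / (n + 1)) :
    ‖a - b‖ ≤ Real.sqrt (2 - 2 * Real.cos (1 / (n + 1))) := by
  have hr := rinner_gt_of_gdist_lt ha hb (one_div_le_pi n) h
  have hsq : ‖a - b‖ ^ 2 = 2 - 2 * rinner a b := by
    rw [norm_sub_sq_real, mem_sphere2_iff.1 ha, mem_sphere2_iff.1 hb]
    show 1 ^ 2 - 2 * rinner a b + 1 ^ 2 = 2 - 2 * rinner a b
    ring
  have h2 : ‖a - b‖ ^ 2 ≤ 2 - 2 * Real.cos (1 / (n+1)) := by rw [hsq]; linarith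
  calc ‖a - b‖ = Real.sqrt (‖a - b‖ ^ 2) := by rw [Real.sqrt_sq (norm_nonneg _)]
    _ ≤ Real.sqrt (2 - 2 * Real.cos (1 / (n+1))) := Real.sqrt_le_sqrt h2

lemma tendsto_bound : Filter.Tendsto (fun n : ℕ => Real.sqrt (2 - 2 * Real.cos (1 / (n + 1))))
    Filter.atTop (nhds 0) := by
  have h1 : Filter.Tendsto (fun n : ℕ => (1:ℝ) / (n + 1)) Filter.atTop (nhds 0) :=
    tendsto_one_div_add_atTop_nhds_zero_nat
  have h2 : Filter.Tendsto (fun n : ℕ => 2 - 2 * Real.cos (1 / (n + 1)))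
      Filter.atTop (nhds 0) := by
    have hc : Filter.Tendsto (fun n : ℕ => Real.cos (1 / (n + 1))) Filter.atTop
        (nhds 1) := by
      have := (Real.continuous_cos.tendsto 0).comp h1
      simpa [Function.comp_def] using this
    have := (tendsto_const_nhds (x := (2:ℝ)) (f := Filter.atTop (α := ℕ))).sub
      (hc.const_mul 2)
    simpa using this
  have := (Real.continuous_sqrt.tendsto 0).comp h2
  simpa [Function.comp_def] using this

lemma opposite_signs_absurd {A B C : Set E3}
    (hA : A ⊆ sphere2) (hB : B ⊆ sphere2) (hC : C ⊆ sphere2)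
    (hCne : sigmaM C ≠ 0)
    (hd : ∀ n : ℕ, ∃ a ∈ A, ∃ b ∈ B, gdist a b < 1 / (n + 1))
    (hposA : ∀ q ∈ C, ∀ a ∈ A, 0 < rinner q a)
    (hnegB : ∀ q ∈ C, ∀ b ∈ B, rinner q b < 0) : False := by
  choose a ha b hb hab using hd
  have hcomp : IsCompact sphere2 := isCompact_sphere (0:E3) 1
  obtain ⟨p, hpmem, φ, hφ, hta⟩ := hcomp.tendsto_subseq (fun n => hA (ha n))
  have hgz : Filter.Tendsto (fun n : ℕ => Real.sqrt (2 - 2 * Real.cos (1 / (φ n + 1))))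
      Filter.atTop (nhds 0) := tendsto_bound.comp hφ.tendsto_atTop
  have htb : Filter.Tendsto (fun n => b (φ n)) Filter.atTop (nhds p) := by
    rw [tendsto_iff_dist_tendsto_zero]
    apply squeeze_zero (fun n => dist_nonneg)
      (g := fun n => Real.sqrt (2 - 2 * Real.cos (1 / (φ n + 1))) + dist (a (φ n)) p)
    · intro n
      calc dist (b (φ n)) p ≤ dist (b (φ n)) (a (φ n)) + dist (a (φ n)) p :=
            dist_triangle _ _ _
        _ ≤ Real.sqrt (2 - 2 * Real.cos (1 / (φ n + 1))) + dist (a (φ n)) p := by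
            have := norm_sub_le_of_close (hA (ha (φ n))) (hB (hb (φ n))) (hab (φ n))
            rw [dist_eq_norm, norm_sub_rev]
            exact add_le_add_left this _
    · have hda : Filter.Tendsto (fun n => dist (a (φ n)) p) Filter.atTop (nhds 0) :=
        (tendsto_iff_dist_tendsto_zero).1 hta
      simpa using hgz.add hda
  have horth : ∀ q ∈ C, ⟪q, p⟫ = 0 := by
    intro q hq
    have hqa : Filter.Tendsto (fun n => ⟪q, a (φ n)⟫) Filter.atTop (nhds ⟪q, p⟫) :=
      Filter.Tendsto.inner tendsto_const_nhds hta
    have hqb : Filter.Tendsto (fun n => ⟪q, b (φ n)⟫) Filter.atTop (nhds ⟪q, p⟫) :=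
      Filter.Tendsto.inner tendsto_const_nhds htb
    have h1 : 0 ≤ ⟪q, p⟫ := ge_of_tendsto' hqa fun n => (hposA q hq _ (ha (φ n))).le
    have h2 : ⟪q, p⟫ ≤ 0 := le_of_tendsto' hqb fun n => (hnegB q hq _ (hb (φ n))).le
    linarith
  have hsub : C ⊆ {z : E3 | ‖z‖ = 1 ∧ ⟪p, z⟫ = 0} := by
    intro z hz
    exact ⟨mem_sphere2_iff.1 (hC hz), by rw [real_inner_comm]; exact horth z hz⟩
  exact hCne (le_antisymm (le_trans (measure_mono hsub)
    (le_of_eq (polar_circle_null (mem_sphere2_iff.1 hpmem)))) (zero_le))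

lemma sign_agree {A B C : Set E3}
    (hA : A ⊆ sphere2) (hB : B ⊆ sphere2) (hC : C ⊆ sphere2)
    (hAc : IsPreconnected A) (hBc : IsPreconnected B) (hCc : IsPreconnected C)
    (hCne : sigmaM C ≠ 0)
    (hd : ∀ n : ℕ, ∃ a ∈ A, ∃ b ∈ B, gdist a b < 1 / (n + 1))
    (hnA : ∀ q ∈ C, ∀ a ∈ A, rinner q a ≠ 0)
    (hnB : ∀ q ∈ C, ∀ b ∈ B, rinner q b ≠ 0) :
    (∀ q ∈ C, ∀ x ∈ A ∪ B, 0 < rinner q x) ∨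
    (∀ q ∈ C, ∀ x ∈ A ∪ B, rinner q x < 0) := by
  have hd' : ∀ n : ℕ, ∃ b ∈ B, ∃ a ∈ A, gdist b a < 1 / (n + 1) := by
    intro n
    obtain ⟨x, hx, y, hy, hxy⟩ := hd n
    exact ⟨y, hy, x, hx, by rwa [gdist_comm]⟩
  have hnA' : ∀ q ∈ C, ∀ a ∈ A, rinner q a ≠ 0 := hnA
  rcases sign_const hCc hAc hnA with pA | nA <;> rcases sign_const hCc hBc hnB with pB | nB
  · left; rintro q hq x (hx | hx)
    · exact pA q hq x hx
    · exact pB q hq x hx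
  · exact (opposite_signs_absurd hA hB hC hCne hd pA nB).elim
  · exact (opposite_signs_absurd hB hA hC hCne hd' pB nA).elim
  · right; rintro q hq x (hx | hx)
    · exact nA q hq x hx
    · exact nB q hq x hx

lemma cross_pos {A B : Set E3} (hA : A ⊆ sphere2) (hB : B ⊆ sphere2)
    (hAc : IsPreconnected A) (hBc : IsPreconnected B)
    (hd : ∀ n : ℕ, ∃ a ∈ A, ∃ b ∈ B, gdist a b < 1 / (n + 1))
    (hn : ∀ a ∈ A, ∀ b ∈ B, rinner a b ≠ 0) :
    ∀ a ∈ A, ∀ b ∈ B, 0 < rinner a b := by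
  rcases sign_const hAc hBc hn with h | h
  · exact h
  · exfalso
    obtain ⟨a, ha, b, hb, hab⟩ := hd 0
    have h1 : Real.cos (1 / ((0:ℕ) + 1)) < rinner a b :=
      rinner_gt_of_gdist_lt (hA ha) (hB hb) (one_div_le_pi 0) hab
    have h2 : (0:ℝ) < Real.cos (1 / ((0:ℕ) + 1)) := by
      norm_num
      apply Real.cos_pos_of_mem_Ioo
      constructor
      · linarith [Real.pi_gt_three]
      · linarith [Real.pi_gt_three]
    linarith [h a ha b hb]

end Stmt17Aux
namespace Stmt17Aux

open scoped RealInnerProductSpace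

lemma nonempty_of_sigma_ne {A : Set E3} (h : sigmaM A ≠ 0) : A.Nonempty := by
  rcases Set.eq_empty_or_nonempty A with rfl | hne
  · exact absurd measure_empty h
  · exact hne

lemma no_neg_pair {C : Set E3} (hC : C ⊆ sphere2) (hconv : SphConvex C)
    (hopf : ∀ p ∈ C, ∀ q ∈ C, p ≠ q → rinner p q ≠ 0)
    {a b : E3} (ha : a ∈ C) (hb : b ∈ C) (hba : b ≠ -a) (hneg : rinner a b < 0) : False := by
  set r := rinner a b with hr
  set t₀ : ℝ := -r / (1 - r) with ht₀
  have hr1 : (0:ℝ) < 1 - r := by linarith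
  have ht0pos : 0 < t₀ := by
    have hnr : 0 < -r := by linarith
    rw [ht₀]; exact div_pos hnr hr1
  have ht0lt : t₀ < 1 := by
    rw [ht₀, div_lt_one hr1]; linarith
  set m : E3 := t₀ • a + (1 - t₀) • b with hm
  have hseg : m ∈ segment ℝ a b := ⟨t₀, 1 - t₀, le_of_lt ht0pos, by linarith, by ring, rfl⟩
  have hanb : a ≠ -b := by
    intro h
    apply hba
    rw [h]; simp
  have hwC : ‖m‖⁻¹ • m ∈ C := hconv a ha b hb hanb ⟨m, hseg, rfl⟩
  have hcomb : t₀ + (1 - t₀) * r = 0 := by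
    rw [ht₀]; field_simp; ring
  have hinner : rinner a (‖m‖⁻¹ • m) = 0 := by
    show ⟪a, ‖m‖⁻¹ • m⟫ = 0
    rw [real_inner_smul_right, hm, inner_add_right, real_inner_smul_right,
      real_inner_smul_right]
    have haa : ⟪a, a⟫ = 1 := rinner_self (hC ha)
    rw [haa]
    have hib : (⟪a, b⟫ : ℝ) = r := rfl
    rw [hib]
    linear_combination (‖t₀ • a + (1 - t₀) • b‖⁻¹ : ℝ) * hcomb
  have hwa : ‖m‖⁻¹ • m ≠ a := by
    intro h
    rw [h, rinner_self (hC ha)] at hinner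
    norm_num at hinner
  exact hopf a ha _ hwC (Ne.symm hwa) hinner

lemma piece_inner_pos {C : Set E3} (hC : C ⊆ sphere2) (hconv : SphConvex C)
    (hopf : ∀ p ∈ C, ∀ q ∈ C, p ≠ q → rinner p q ≠ 0) (hme : sigmaM C ≠ 0) :
    ∀ a ∈ C, ∀ b ∈ C, 0 < rinner a b := by
  intro a ha b hb
  rcases eq_or_ne a b with rfl | hab
  · rw [rinner_self (hC ha)]; norm_num
  rcases lt_trichotomy (rinner a b) 0 with hneg | hzero | hpos
  · exfalso
    rcases eq_or_ne b (-a) with rfl | hba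
    · -- antipodal pair: find a third point
      have hz : ∃ z ∈ C, z ≠ a ∧ z ≠ -a := by
        by_contra hcon
        push_neg at hcon
        have hsub : C ⊆ {a, -a} := by
          intro z hz
          rcases eq_or_ne z a with rfl | h1
          · exact Set.mem_insert _ _
          · rcases eq_or_ne z (-a) with rfl | h2
            · exact Set.mem_insert_of_mem _ rfl
            · exact absurd h2 (fun h => h (hcon z hz h1))
        exact hme (le_antisymm (le_trans (measure_mono hsub)
          (le_of_eq (sigma_pair_null a (-a)))) (zero_le))
      obtain ⟨z, hzC, hza, hzna⟩ := hz
      have hz0 : rinner a z ≠ 0 := hopf a ha z hzC (Ne.symm hza)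
      rcases lt_or_gt_of_ne hz0 with h | h
      · exact no_neg_pair hC hconv hopf ha hzC hzna h
      · have hbz : rinner (-a) z < 0 := by
          show ⟪-a, z⟫ < 0
          rw [inner_neg_left]
          have : (⟪a, z⟫ : ℝ) = rinner a z := rfl
          linarith [h]
        have hzb : z ≠ -(-a) := by rw [neg_neg]; exact hza
        exact no_neg_pair hC hconv hopf hb hzC hzb hbz
    · exact no_neg_pair hC hconv hopf ha hb hba hneg
  · exact absurd hzero (hopf a ha b hb hab)
  · exact hpos

lemma disjoint_of_gsetDist_pos {A B : Set E3} (hA : A ⊆ sphere2)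
    (h : 0 < gsetDist A B) : A ∩ B = ∅ := by
  rw [Set.eq_empty_iff_forall_notMem]
  rintro x ⟨hxA, hxB⟩
  have hbdd : BddBelow (Set.image2 gdist A B) := by
    refine ⟨0, ?_⟩
    rintro _ ⟨a, ha, b, hb, rfl⟩
    exact gdist_nonneg' a b
  have hle : gsetDist A B ≤ gdist x x := csInf_le hbdd (Set.mem_image2_of_mem hxA hxB)
  rw [gdist, rinner_self (hA hxA), Real.arccos_one] at hle
  linarith

/-- The invariant carried through the merging induction. -/
def MergeInv (F : Finset (Set E3)) : Prop :=
  (∀ A ∈ F, A ⊆ sphere2 ∧ SphConvex A ∧ sigmaM A ≠ 0 ∧ ∀ a ∈ A, ∀ b ∈ A, 0 < rinner a b) ∧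
  ∀ A ∈ F, ∀ B ∈ F, A ≠ B → ∀ a ∈ A, ∀ b ∈ B, rinner a b ≠ 0

lemma main_ind : ∀ (n : ℕ) (F : Finset (Set E3)), F.card ≤ n → MergeInv F →
    ∃ G : Finset (Set E3), G.card ≤ F.card ∧ MergeInv G ∧ (∀ S ∈ F, ∃ T ∈ G, S ⊆ T) ∧
      (∀ A ∈ G, ∀ B ∈ G, A ≠ B → 0 < gsetDist A B) ∧ (F.Nonempty → G.Nonempty) := by
  intro n
  induction n with
  | zero =>
    intro F hcard _
    have hF : F = ∅ := Finset.card_eq_zero.1 (Nat.le_zero.1 hcard)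
    subst hF
    refine ⟨∅, le_refl _, ⟨by simp, by simp⟩, by simp, by simp, fun h => h⟩
  | succ n ih =>
    intro F hcard hInv
    classical
    by_cases hall : ∀ A ∈ F, ∀ B ∈ F, A ≠ B → 0 < gsetDist A B
    · exact ⟨F, le_refl _, hInv, fun S hS => ⟨S, hS, subset_rfl⟩, hall, id⟩
    push_neg at hall
    obtain ⟨A, hAF, B, hBF, hABne, hdle⟩ := hall
    obtain ⟨hmem, hcross⟩ := hInv
    obtain ⟨hA1, hA2, hA3, hA4⟩ := hmem A hAF
    obtain ⟨hB1, hB2, hB3, hB4⟩ := hmem B hBF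
    have hAne : A.Nonempty := nonempty_of_sigma_ne hA3
    have hBne : B.Nonempty := nonempty_of_sigma_ne hB3
    have hd := close_pairs hAne hBne hdle
    have hAc : IsPreconnected A := isPreconnected_of_sphConvex hA1 hA2 hA4
    have hBc : IsPreconnected B := isPreconnected_of_sphConvex hB1 hB2 hB4
    have hcrossAB : ∀ a ∈ A, ∀ b ∈ B, 0 < rinner a b :=
      cross_pos hA1 hB1 hAc hBc hd (fun a ha b hb => hcross A hAF B hBF hABne a ha b hb)
    have hABpos : ∀ x ∈ A ∪ B, ∀ y ∈ A ∪ B, 0 < rinner x y := by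
      rintro x (hx | hx) y (hy | hy)
      · exact hA4 x hx y hy
      · exact hcrossAB x hx y hy
      · rw [rinner_comm]; exact hcrossAB y hy x hx
      · exact hB4 x hx y hy
    set H := sphHull (A ∪ B) with hH
    have hHsphere : H ⊆ sphere2 := sphHull_subset_sphere hABpos
    have hHconv : SphConvex H := sphConvex_sphHull hABpos
    have hHpos : ∀ a ∈ H, ∀ b ∈ H, 0 < rinner a b := sphHull_inner_pos hABpos
    have hABsub : A ∪ B ⊆ H := subset_sphHull (Set.union_subset hA1 hB1)
    have hAH : A ⊆ H := subset_trans Set.subset_union_left hABsub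
    have hBH : B ⊆ H := subset_trans Set.subset_union_right hABsub
    have hHme : sigmaM H ≠ 0 := by
      intro h0
      exact hA3 (le_antisymm (le_trans (measure_mono hAH) (le_of_eq h0)) (zero_le))
    -- sign agreement with every other piece
    have hHout : ∀ C ∈ F, C ≠ A → C ≠ B → ∀ q ∈ C, ∀ x ∈ H, rinner q x ≠ 0 := by
      intro C hCF hCA hCB
      obtain ⟨hC1, hC2, hC3, hC4⟩ := hmem C hCF
      have hCc : IsPreconnected C := isPreconnected_of_sphConvex hC1 hC2 hC4
      have hsg := sign_agree hA1 hB1 hC1 hAc hBc hCc hC3 hd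
        (fun q hq a ha => hcross C hCF A hAF hCA q hq a ha)
        (fun q hq b hb => hcross C hCF B hBF hCB q hq b hb)
      intro q hq x hx
      rcases hsg with hsp | hsn
      · exact (sphHull_inner_sign_pos hABpos (fun s hs => hsp q hq s hs) x hx).ne'
      · exact (sphHull_inner_sign_neg hABpos (fun s hs => hsn q hq s hs) x hx).ne
    set F'' := (F.erase A).erase B with hF''
    have hmemF'' : ∀ X, X ∈ F'' → X ∈ F ∧ X ≠ A ∧ X ≠ B := by
      intro X hX
      rw [hF'', Finset.mem_erase, Finset.mem_erase] at hX
      exact ⟨hX.2.2, hX.2.1, hX.1⟩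
    set G₀ : Finset (Set E3) := insert H F'' with hG₀
    have hInvG₀ : MergeInv G₀ := by
      constructor
      · intro X hX
        rw [hG₀, Finset.mem_insert] at hX
        rcases hX with rfl | hX
        · exact ⟨hHsphere, hHconv, hHme, hHpos⟩
        · exact hmem X (hmemF'' X hX).1
      · intro X hX Y hY hXY
        rw [hG₀, Finset.mem_insert] at hX hY
        rcases hX with rfl | hX <;> rcases hY with rfl | hY
        · exact absurd rfl hXY
        · obtain ⟨hYF, hYA, hYB⟩ := hmemF'' Y hY
          intro a ha b hb
          rw [rinner_comm]
          exact hHout Y hYF hYA hYB b hb a ha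
        · obtain ⟨hXF, hXA, hXB⟩ := hmemF'' X hX
          intro a ha b hb
          exact hHout X hXF hXA hXB a ha b hb
        · obtain ⟨hXF, _, _⟩ := hmemF'' X hX
          obtain ⟨hYF, _, _⟩ := hmemF'' Y hY
          exact hcross X hXF Y hYF hXY
    have hBins : B ∈ F.erase A := Finset.mem_erase.2 ⟨fun h => hABne h.symm, hBF⟩
    have hcard2 : 2 ≤ F.card := by
      have := Finset.one_lt_card.2 ⟨A, hAF, B, hBF, hABne⟩
      omega
    have hF''card : F''.card = F.card - 2 := by
      rw [hF'', Finset.card_erase_of_mem hBins, Finset.card_erase_of_mem hAF]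
      omega
    have hG₀card : G₀.card ≤ F.card - 1 := by
      have h1 : G₀.card ≤ F''.card + 1 := Finset.card_insert_le _ _
      omega
    obtain ⟨G, hGcard, hGInv, hGcover, hGdist, hGne⟩ := ih G₀ (by omega) hInvG₀
    refine ⟨G, by omega, hGInv, ?_, hGdist, ?_⟩
    · intro S hS
      rcases eq_or_ne S A with rfl | hSA
      · obtain ⟨T, hT, hHT⟩ := hGcover H (Finset.mem_insert_self _ _)
        exact ⟨T, hT, subset_trans hAH hHT⟩
      rcases eq_or_ne S B with rfl | hSB
      · obtain ⟨T, hT, hHT⟩ := hGcover H (Finset.mem_insert_self _ _)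
        exact ⟨T, hT, subset_trans hBH hHT⟩
      · refine hGcover S ?_
        rw [hG₀, Finset.mem_insert]
        right
        rw [hF'', Finset.mem_erase, Finset.mem_erase]
        exact ⟨hSB, hSA, hS⟩
    · intro _
      exact hGne ⟨H, Finset.mem_insert_self _ _⟩

end Stmt17Aux
open Stmt17Aux in
/-- second convexification — one can pass to a union of at most w
spherically convex sets at pairwise positive distance, without losing measure. -/
theorem stmt17 (w : ℕ) (hw : 1 ≤ w) (N₁ : Set E3) (hN : N₁ ⊆ sphere2) (hOPF : OPF N₁)
    (D : Fin w → Set E3) (hconv : ∀ i, SphConvex (D i))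
    (hdisj : Pairwise fun i j => D i ∩ D j = ∅)
    (hU : N₁ = ⋃ i, D i) :
    ∃ w' : ℕ, 1 ≤ w' ∧ w' ≤ w ∧ ∃ (N₂ : Set E3) (Ee : Fin w' → Set E3),
      N₂ ⊆ sphere2 ∧ OPF N₂ ∧ (∀ i, SphConvex (Ee i)) ∧
      (Pairwise fun i j => Ee i ∩ Ee j = ∅) ∧
      (Pairwise fun i j => 0 < gsetDist (Ee i) (Ee j)) ∧
      N₂ = ⋃ i, Ee i ∧ muS N₂ ≥ muS N₁ := by
  classical
  have hDN : ∀ i, D i ⊆ N₁ := fun i => by rw [hU]; exact Set.subset_iUnion D i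
  have hDsub : ∀ i, D i ⊆ sphere2 := fun i => subset_trans (hDN i) hN
  by_cases hallnull : ∀ i, sigmaM (D i) = 0
  · refine ⟨1, le_refl 1, hw, ∅, fun _ => ∅, Set.empty_subset _, ?_, ?_, ?_, ?_, by simp, ?_⟩
    · intro p hp; exact absurd hp (Set.notMem_empty p)
    · intro _ x hx; exact absurd hx (Set.notMem_empty x)
    · exact Subsingleton.pairwise
    · exact Subsingleton.pairwise
    · have hzero : muS N₁ = 0 := by
        rw [hU]
        apply measure_iUnion_null
        intro i
        simp [muS, Measure.smul_apply, hallnull i]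
      rw [hzero]
      exact zero_le
  · push_neg at hallnull
    set F₀ : Finset (Set E3) :=
      (Finset.univ.filter (fun i => sigmaM (D i) ≠ 0)).image D with hF₀
    have hmemF₀ : ∀ S ∈ F₀, ∃ i, sigmaM (D i) ≠ 0 ∧ S = D i := by
      intro S hS
      rw [hF₀, Finset.mem_image] at hS
      obtain ⟨i, hi, rfl⟩ := hS
      rw [Finset.mem_filter] at hi
      exact ⟨i, hi.2, rfl⟩
    have hInvF₀ : MergeInv F₀ := by
      constructor
      · intro S hS
        obtain ⟨i, hi, rfl⟩ := hmemF₀ S hS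
        exact ⟨hDsub i, hconv i, hi, piece_inner_pos (hDsub i) (hconv i)
          (fun p hp q hq hpq => hOPF p (hDN i hp) q (hDN i hq) hpq) hi⟩
      · intro S hS T hT hST a haS b hbT
        obtain ⟨i, hi, rfl⟩ := hmemF₀ S hS
        obtain ⟨j, hj, rfl⟩ := hmemF₀ T hT
        have hij : i ≠ j := fun h => hST (by rw [h])
        have hab : a ≠ b := by
          intro h
          have : a ∈ D i ∩ D j := ⟨haS, h ▸ hbT⟩
          rw [hdisj hij] at this
          exact this
        exact hOPF a (hDN i haS) b (hDN j hbT) hab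
    have hF₀ne : F₀.Nonempty := by
      obtain ⟨i, hi⟩ := hallnull
      exact ⟨D i, Finset.mem_image_of_mem D (Finset.mem_filter.2 ⟨Finset.mem_univ i, hi⟩)⟩
    obtain ⟨G, hGcard, hGInv, hGcover, hGdist, hGne⟩ :=
      main_ind F₀.card F₀ (le_refl _) hInvF₀
    have hGne' := hGne hF₀ne
    obtain ⟨hGmem, hGcross⟩ := hGInv
    refine ⟨G.card, Finset.card_pos.2 hGne', ?_, ?_⟩
    · refine le_trans hGcard (le_trans Finset.card_image_le
        (le_trans (Finset.card_filter_le _ _) ?_))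
      simp
    set Ee : Fin G.card → Set E3 := fun i => (G.equivFin.symm i : Set E3) with hEe
    have hEemem : ∀ i, Ee i ∈ G := fun i => (G.equivFin.symm i).2
    have hEeinj : Function.Injective Ee := by
      intro i j h
      have h1 : G.equivFin.symm i = G.equivFin.symm j := Subtype.coe_injective h
      exact G.equivFin.symm.injective h1
    have hTEe : ∀ T ∈ G, ∃ i, Ee i = T := by
      intro T hT
      refine ⟨G.equivFin ⟨T, hT⟩, ?_⟩
      rw [hEe]
      simp
    refine ⟨⋃ i, Ee i, Ee, ?_, ?_, ?_, ?_, ?_, rfl, ?_⟩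
    · exact Set.iUnion_subset fun i => (hGmem _ (hEemem i)).1
    · intro p hp q hq hpq
      obtain ⟨i, hpi⟩ := Set.mem_iUnion.1 hp
      obtain ⟨j, hqj⟩ := Set.mem_iUnion.1 hq
      rcases eq_or_ne (Ee i) (Ee j) with heq | hne
      · exact ((hGmem _ (hEemem i)).2.2.2 p hpi q (heq ▸ hqj)).ne'
      · exact hGcross _ (hEemem i) _ (hEemem j) hne p hpi q hqj
    · exact fun i => (hGmem _ (hEemem i)).2.1
    · intro i j hij
      exact disjoint_of_gsetDist_pos (hGmem _ (hEemem i)).1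
        (hGdist _ (hEemem i) _ (hEemem j) (fun h => hij (hEeinj h)))
    · intro i j hij
      exact hGdist _ (hEemem i) _ (hEemem j) (fun h => hij (hEeinj h))
    · have hsub : N₁ ⊆ (⋃ i, Ee i) ∪ ⋃ i ∈ {i : Fin w | sigmaM (D i) = 0}, D i := by
        rw [hU]
        intro x hx
        obtain ⟨i, hxi⟩ := Set.mem_iUnion.1 hx
        by_cases hi : sigmaM (D i) = 0
        · exact Or.inr (Set.mem_biUnion hi hxi)
        · left
          have hDF : D i ∈ F₀ :=
            Finset.mem_image_of_mem D (Finset.mem_filter.2 ⟨Finset.mem_univ i, hi⟩)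
          obtain ⟨T, hTG, hDT⟩ := hGcover (D i) hDF
          obtain ⟨k, hk⟩ := hTEe T hTG
          exact Set.mem_iUnion.2 ⟨k, hk ▸ hDT hxi⟩
      have hnull : sigmaM (⋃ i ∈ {i : Fin w | sigmaM (D i) = 0}, D i) = 0 :=
        (measure_biUnion_null_iff (Set.to_countable _)).2 (fun i hi => hi)
      have hσ : sigmaM N₁ ≤ sigmaM (⋃ i, Ee i) := by
        calc sigmaM N₁ ≤ sigmaM ((⋃ i, Ee i) ∪ ⋃ i ∈ {i : Fin w | sigmaM (D i) = 0}, D i) :=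
              measure_mono hsub
          _ ≤ sigmaM (⋃ i, Ee i) + sigmaM (⋃ i ∈ {i : Fin w | sigmaM (D i) = 0}, D i) :=
              measure_union_le _ _
          _ = sigmaM (⋃ i, Ee i) := by rw [hnull, add_zero]
      show muS (⋃ i, Ee i) ≥ muS N₁
      simp only [muS, Measure.smul_apply, smul_eq_mul]
      exact mul_le_mul_right hσ _

end
end

section
/- Let k ≥ 1. For each j ∈ ℕ, let C_j¹, …, C_jᵏ be nonempty closed spherically convex subsets of 𝕊² whose union M_j = ⋃_{i=1}^{k} C_jⁱ is orthogonal-pair-free. Let C*¹, …, C*ᵏ be nonempty closed spherically convex subsets of 𝕊² with δ_H(C_jⁱ, C*ⁱ) → 0 as j → ∞ for every 1 ≤ i ≤ k. Then the set ⋃_{i=1}^{k} int(C*ⁱ) is orthogonal-pair-free, where int denotes interior relative to 𝕊². -/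
open Metric Set MeasureTheory Filter
open scoped ENNReal Topology

noncomputable section

section Aux

lemma gdist_nonneg' (p q : E3) : 0 ≤ gdist p q := Real.arccos_nonneg _
lemma gdist_le_pi (p q : E3) : gdist p q ≤ Real.pi := Real.arccos_le_pi _

lemma mem_sphere2_iff {p : E3} : p ∈ sphere2 ↔ ‖p‖ = 1 := by
  simp [sphere2, mem_sphere_iff_norm]

lemma gdistToSet_le {y z : E3} {B : Set E3} (hz : z ∈ B) : gdistToSet y B ≤ gdist y z :=
  csInf_le ⟨0, fun _ ⟨w, _, hw⟩ => hw ▸ gdist_nonneg' y w⟩ ⟨z, hz, rfl⟩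

lemma gdistToSet_le_pi {y : E3} {B : Set E3} (hB : B.Nonempty) : gdistToSet y B ≤ Real.pi := by
  obtain ⟨z, hz⟩ := hB
  exact (gdistToSet_le hz).trans (gdist_le_pi _ _)

/-- From Hausdorff closeness, every point of K has a nearby point in B. -/
lemma exists_gclose {B K : Set E3} (hB : B.Nonempty) {y : E3} (hy : y ∈ K) {d : ℝ}
    (h : geoHausdorff B K < d) : ∃ z ∈ B, gdist y z < d := by
  have h1 : gdistToSet y B ≤ ⨆ w ∈ K, gdistToSet w B := by
    have hb : BddAbove (Set.range fun w => ⨆ _ : w ∈ K, gdistToSet w B) := by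
      refine ⟨Real.pi, fun x ⟨w, hw⟩ => ?_⟩
      rw [← hw]
      exact Real.iSup_le (fun _ => gdistToSet_le_pi hB) Real.pi_pos.le
    calc gdistToSet y B = ⨆ _ : y ∈ K, gdistToSet y B :=
          (ciSup_pos (f := fun _ : y ∈ K => gdistToSet y B) hy).symm
      _ ≤ ⨆ w ∈ K, gdistToSet w B := le_ciSup hb y
  have h2 : gdistToSet y B < d := lt_of_le_of_lt (h1.trans (le_max_right _ _)) h
  obtain ⟨c, ⟨z, hz, hdz⟩, hd⟩ := exists_lt_of_csInf_lt (hB.image _) h2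
  exact ⟨z, hz, hdz ▸ hd⟩

/-- Choice of δ converting geodesic closeness to Euclidean closeness for unit vectors. -/
lemma delta_choice {ε : ℝ} (hε : 0 < ε) :
    ∃ δ > 0, ∀ y z : E3, ‖y‖ = 1 → ‖z‖ = 1 → gdist y z < δ → ‖y - z‖ < ε := by
  have hc : Filter.Tendsto Real.cos (nhds 0) (nhds 1) := by
    simpa using Real.continuous_cos.tendsto 0
  have hev : ∀ᶠ x in nhds (0:ℝ), Real.cos x > 1 - ε ^ 2 / 2 := by
    apply hc.eventually (eventually_gt_nhds (by nlinarith))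
  obtain ⟨δ, hδpos, hδ⟩ := Metric.eventually_nhds_iff.mp hev
  refine ⟨δ, hδpos, fun y z hy hz hlt => ?_⟩
  have hcs : |rinner y z| ≤ 1 := by
    have := abs_real_inner_le_norm y z
    rwa [hy, hz, one_mul] at this
  have hcos : Real.cos (gdist y z) = rinner y z :=
    Real.cos_arccos (by linarith [abs_le.mp hcs]) (by linarith [abs_le.mp hcs])
  have hsmall : dist (gdist y z) 0 < δ := by
    rw [Real.dist_eq, sub_zero, abs_of_nonneg (gdist_nonneg' y z)]; exact hlt
  have h3 : rinner y z > 1 - ε ^ 2 / 2 := hcos ▸ hδ hsmall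
  have h4 : ‖y - z‖ ^ 2 = 2 - 2 * rinner y z := by
    rw [norm_sub_sq_real, hy, hz, rinner]; ring
  nlinarith [norm_nonneg (y - z)]

lemma norm_normalize {v : E3} (hv : v ≠ 0) : ‖‖v‖⁻¹ • v‖ = 1 := by
  rw [norm_smul, Real.norm_eq_abs, abs_inv, abs_of_nonneg (norm_nonneg v),
    inv_mul_cancel₀ (norm_ne_zero_iff.mpr hv)]

lemma seg_ne_zero {x y : E3} (hx : ‖x‖ = 1) (hy : ‖y‖ = 1) (hxy : x ≠ -y)
    {t : ℝ} (ht0 : 0 ≤ t) (ht1 : t ≤ 1) : (1 - t) • x + t • y ≠ 0 := by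
  intro h
  have h1 : (1 - t) • x = -(t • y) := by
    rw [eq_comm, neg_eq_iff_add_eq_zero, add_comm]; exact h
  have h2 : |1 - t| = |t| := by
    have := congrArg norm h1
    rwa [norm_neg, norm_smul, norm_smul, Real.norm_eq_abs, Real.norm_eq_abs,
      hx, hy, mul_one, mul_one] at this
  have ht : t = 1 / 2 := by
    rw [abs_of_nonneg (by linarith), abs_of_nonneg ht0] at h2; linarith
  apply hxy
  have h3 : (1 - t) • x = (1/2 : ℝ) • x := by rw [ht]; norm_num
  have h4 : (t : ℝ) • y = (1/2 : ℝ) • y := by rw [ht]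
  rw [h3, h4] at h
  have := congrArg (fun v : E3 => (2 : ℝ) • v) h
  simp only [smul_add, smul_smul] at this
  norm_num at this
  exact eq_neg_of_add_eq_zero_left this

lemma exists_orth_on_arc {x y q : E3} (hx : ‖x‖ = 1) (hy : ‖y‖ = 1)
    (hxy : x ≠ -y) (hpos : 0 < rinner x q) (hneg : rinner y q < 0) :
    ∃ p ∈ arc x y, rinner p q = 0 ∧ ‖p‖ = 1 := by
  set z : ℝ → E3 := fun t => (1 - t) • x + t • y with hz
  have hzne : ∀ t ∈ Icc (0:ℝ) 1, z t ≠ 0 := fun t ht => seg_ne_zero hx hy hxy ht.1 ht.2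
  have hzc : Continuous z := by
    apply Continuous.add
    · exact (continuous_const.sub continuous_id).smul continuous_const
    · exact continuous_id.smul continuous_const
  set g : ℝ → ℝ := fun t => inner ℝ (‖z t‖⁻¹ • (z t)) q with hg
  have hgc : ContinuousOn g (Icc 0 1) := by
    apply ContinuousOn.inner _ continuousOn_const
    exact ((hzc.continuousOn.norm.inv₀ (fun t ht => norm_ne_zero_iff.mpr (hzne t ht))).smul
      hzc.continuousOn)
  have hg0 : g 0 = rinner x q := by
    simp only [hg, hz]
    norm_num [hx, rinner]
  have hg1 : g 1 = rinner y q := by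
    simp only [hg, hz]
    norm_num [hy, rinner]
  have h0mem : (0:ℝ) ∈ Icc (g 1) (g 0) := by
    rw [hg0, hg1]; exact ⟨hneg.le, hpos.le⟩
  obtain ⟨t₀, ht₀, hgt₀⟩ := intermediate_value_Icc' zero_le_one hgc h0mem
  refine ⟨‖z t₀‖⁻¹ • z t₀, ⟨z t₀, ?_, rfl⟩, hgt₀, norm_normalize (hzne t₀ ht₀)⟩
  exact ⟨1 - t₀, t₀, by linarith [ht₀.2], ht₀.1, by ring, rfl⟩

end Aux

set_option maxHeartbeats 1000000 in
/-- the union of the relative interiors of the Hausdorff limits is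
orthogonal-pair-free, provided each approximating union is. -/
theorem stmt19 (k : ℕ) (hk : 1 ≤ k) (C : ℕ → Fin k → Set E3)
    (hC : ∀ j i, (C j i).Nonempty ∧ IsClosed (C j i) ∧ C j i ⊆ sphere2 ∧ SphConvex (C j i))
    (hOPF : ∀ j, OPF (⋃ i, C j i))
    (Cstar : Fin k → Set E3)
    (hCs : ∀ i, (Cstar i).Nonempty ∧ IsClosed (Cstar i) ∧ Cstar i ⊆ sphere2 ∧ SphConvex (Cstar i))
    (hconv : ∀ i, Filter.Tendsto (fun j => geoHausdorff (C j i) (Cstar i))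
      Filter.atTop (nhds 0)) :
    OPF (⋃ i, relInterior (Cstar i)) := by
  intro p hp q hq hpq h0
  obtain ⟨a, hpa⟩ := mem_iUnion.mp hp
  obtain ⟨b, hqb⟩ := mem_iUnion.mp hq
  simp only [relInterior, mem_setOf_eq] at hpa hqb
  obtain ⟨hpS, U, hUo, hpU, hUsub⟩ := hpa
  obtain ⟨hqS, V, hVo, hqV, hVsub⟩ := hqb
  have hpn : ‖p‖ = 1 := mem_sphere2_iff.mp hpS
  have hqn : ‖q‖ = 1 := mem_sphere2_iff.mp hqS
  have hq_in : q ∈ Cstar b := hVsub ⟨hqV, hqS⟩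
  obtain ⟨r, hrpos, hball⟩ := Metric.isOpen_iff.mp hUo p hpU
  set e : ℝ := min (r/4) (1/4) with hedef
  have hepos : 0 < e := lt_min (by linarith) (by norm_num)
  have he1 : e ≤ 1/4 := min_le_right _ _
  have her : e ≤ r/4 := min_le_left _ _
  set v : E3 := p + e • q with hvdef
  set w : E3 := p - e • q with hwdef
  have hqq : rinner q q = 1 := by
    rw [rinner, real_inner_self_eq_norm_sq, hqn]; norm_num
  have hvsq : ‖v‖^2 = 1 + e^2 := by
    rw [hvdef, norm_add_sq_real, hpn, norm_smul, Real.norm_eq_abs, abs_of_pos hepos,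
      real_inner_smul_right]
    rw [rinner] at h0
    rw [h0, hqn]; ring
  have hwsq : ‖w‖^2 = 1 + e^2 := by
    rw [hwdef, norm_sub_sq_real, hpn, norm_smul, Real.norm_eq_abs, abs_of_pos hepos,
      real_inner_smul_right]
    rw [rinner] at h0
    rw [h0, hqn]; ring
  have hv1 : 1 ≤ ‖v‖ := by nlinarith [norm_nonneg v]
  have hvle : ‖v‖ ≤ 1 + e := by nlinarith [norm_nonneg v]
  have hw1 : 1 ≤ ‖w‖ := by nlinarith [norm_nonneg w]
  have hwle : ‖w‖ ≤ 1 + e := by nlinarith [norm_nonneg w]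
  have hvne : v ≠ 0 := by intro h; rw [h, norm_zero] at hv1; linarith
  have hwne : w ≠ 0 := by intro h; rw [h, norm_zero] at hw1; linarith
  set u : E3 := ‖v‖⁻¹ • v with hudef
  set u' : E3 := ‖w‖⁻¹ • w with hu'def
  have hun : ‖u‖ = 1 := norm_normalize hvne
  have hu'n : ‖u'‖ = 1 := norm_normalize hwne
  have hvinv : ‖v‖⁻¹ * ‖v‖ = 1 := inv_mul_cancel₀ (by positivity)
  have hwinv : ‖w‖⁻¹ * ‖w‖ = 1 := inv_mul_cancel₀ (by positivity)
  have hvinvle : ‖v‖⁻¹ ≤ 1 := inv_le_one_of_one_le₀ hv1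
  have hwinvle : ‖w‖⁻¹ ≤ 1 := inv_le_one_of_one_le₀ hw1
  have hvinvpos : 0 < ‖v‖⁻¹ := by positivity
  have hwinvpos : 0 < ‖w‖⁻¹ := by positivity
  -- inner products of u, u' with q
  have huq : rinner u q = ‖v‖⁻¹ * e := by
    rw [hudef, rinner, real_inner_smul_left, hvdef, inner_add_left, real_inner_smul_left]
    rw [rinner] at h0 hqq
    rw [h0, hqq]; ring
  have hu'q : rinner u' q = -(‖w‖⁻¹ * e) := by
    rw [hu'def, rinner, real_inner_smul_left, hwdef, inner_sub_left, real_inner_smul_left]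
    rw [rinner] at h0 hqq
    rw [h0, hqq]; ring
  -- u and u' are close to p
  have hup : ‖u - p‖ ≤ 2 * e := by
    have h1 : u - p = (u - v) + (v - p) := by abel
    have h2 : ‖v - p‖ = e := by
      rw [hvdef]
      simp [norm_smul, Real.norm_eq_abs, abs_of_pos hepos, hqn]
    have h3 : ‖u - v‖ ≤ e := by
      have : u - v = (‖v‖⁻¹ - 1) • v := by rw [hudef, sub_smul, one_smul]
      rw [this, norm_smul, Real.norm_eq_abs, abs_of_nonpos (by linarith)]
      have hr : -(‖v‖⁻¹ - 1) * ‖v‖ = ‖v‖ - ‖v‖⁻¹ * ‖v‖ := by ring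
      rw [hr, hvinv]; linarith
    calc ‖u - p‖ ≤ ‖u - v‖ + ‖v - p‖ := h1 ▸ norm_add_le _ _
      _ ≤ 2 * e := by rw [h2]; linarith
  have hu'p : ‖u' - p‖ ≤ 2 * e := by
    have h1 : u' - p = (u' - w) + (w - p) := by abel
    have h2 : ‖w - p‖ = e := by
      rw [hwdef]
      simp [norm_smul, Real.norm_eq_abs, abs_of_pos hepos, hqn]
    have h3 : ‖u' - w‖ ≤ e := by
      have : u' - w = (‖w‖⁻¹ - 1) • w := by rw [hu'def, sub_smul, one_smul]
      rw [this, norm_smul, Real.norm_eq_abs, abs_of_nonpos (by linarith)]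
      have hr : -(‖w‖⁻¹ - 1) * ‖w‖ = ‖w‖ - ‖w‖⁻¹ * ‖w‖ := by ring
      rw [hr, hwinv]; linarith
    calc ‖u' - p‖ ≤ ‖u' - w‖ + ‖w - p‖ := h1 ▸ norm_add_le _ _
      _ ≤ 2 * e := by rw [h2]; linarith
  -- u, u' lie in Cstar a
  have hu_in : u ∈ Cstar a := by
    refine hUsub ⟨hball ?_, mem_sphere2_iff.mpr hun⟩
    rw [Metric.mem_ball, dist_eq_norm]; linarith
  have hu'_in : u' ∈ Cstar a := by
    refine hUsub ⟨hball ?_, mem_sphere2_iff.mpr hu'n⟩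
    rw [Metric.mem_ball, dist_eq_norm]; linarith
  -- margin
  set m : ℝ := min (‖v‖⁻¹ * e) (‖w‖⁻¹ * e) with hmdef
  have hmpos : 0 < m := lt_min (by positivity) (by positivity)
  have hm1 : m ≤ ‖v‖⁻¹ * e := min_le_left _ _
  have hm2 : m ≤ ‖w‖⁻¹ * e := min_le_right _ _
  have hme : m ≤ e := by nlinarith
  set ε : ℝ := m / 4 with hεdef
  have hεpos : 0 < ε := by positivity
  obtain ⟨δ, hδpos, hδ⟩ := delta_choice hεpos
  have hev := ((hconv a).eventually (gt_mem_nhds hδpos)).and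
    ((hconv b).eventually (gt_mem_nhds hδpos))
  obtain ⟨j, hja, hjb⟩ := hev.exists
  -- approximating points
  obtain ⟨uj, huj, hujg⟩ := exists_gclose (hC j a).1 hu_in hja
  obtain ⟨u'j, hu'j, hu'jg⟩ := exists_gclose (hC j a).1 hu'_in hja
  obtain ⟨qj, hqj, hqjg⟩ := exists_gclose (hC j b).1 hq_in hjb
  have hujn : ‖uj‖ = 1 := mem_sphere2_iff.mp ((hC j a).2.2.1 huj)
  have hu'jn : ‖u'j‖ = 1 := mem_sphere2_iff.mp ((hC j a).2.2.1 hu'j)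
  have hqjn : ‖qj‖ = 1 := mem_sphere2_iff.mp ((hC j b).2.2.1 hqj)
  have hujd : ‖u - uj‖ < ε := hδ u uj hun hujn hujg
  have hu'jd : ‖u' - u'j‖ < ε := hδ u' u'j hu'n hu'jn hu'jg
  have hqjd : ‖q - qj‖ < ε := hδ q qj hqn hqjn hqjg
  -- inner product estimates
  have key : ∀ x x' : E3, ‖x‖ = 1 → ‖x - x'‖ < ε →
      |rinner x' qj - rinner x q| < 2 * ε := by
    intro x x' hx hxx'
    have expand : rinner x' qj - rinner x q = rinner (x' - x) qj + rinner x (qj - q) := by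
      simp only [rinner, inner_sub_left, inner_sub_right]; ring
    rw [expand]
    have b1 : |rinner (x' - x) qj| ≤ ‖x' - x‖ * ‖qj‖ := abs_real_inner_le_norm _ _
    have b2 : |rinner x (qj - q)| ≤ ‖x‖ * ‖qj - q‖ := abs_real_inner_le_norm _ _
    have hsym : ‖x' - x‖ = ‖x - x'‖ := norm_sub_rev _ _
    have hsym2 : ‖qj - q‖ = ‖q - qj‖ := norm_sub_rev _ _
    calc |rinner (x' - x) qj + rinner x (qj - q)|
        ≤ |rinner (x' - x) qj| + |rinner x (qj - q)| := abs_add_le _ _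
      _ < 2 * ε := by
          rw [hsym, hqjn, mul_one] at b1
          rw [hx, one_mul, hsym2] at b2
          linarith [hqjd]
  have hpos : 0 < rinner uj qj := by
    have := key u uj hun hujd
    have h1 := (abs_lt.mp this).1
    rw [huq] at h1
    have : 2 * ε = m / 2 := by rw [hεdef]; ring
    linarith
  have hneg : rinner u'j qj < 0 := by
    have := key u' u'j hu'n hu'jd
    have h1 := (abs_lt.mp this).2
    rw [hu'q] at h1
    have : 2 * ε = m / 2 := by rw [hεdef]; ring
    linarith
  -- uj ≠ -u'j
  have hdist : ‖uj - u'j‖ < 2 := by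
    have t1 : dist uj u'j ≤ dist uj u + dist u u' + dist u' u'j := dist_triangle4 _ _ _ _
    have t2 : dist u u' ≤ dist u p + dist p u' := dist_triangle _ _ _
    simp only [dist_eq_norm] at t1 t2
    have e1 : ‖uj - u‖ = ‖u - uj‖ := norm_sub_rev _ _
    have e3 : ‖p - u'‖ = ‖u' - p‖ := norm_sub_rev _ _
    rw [e1] at t1
    rw [e3] at t2
    have hε4 : ε ≤ e := by rw [hεdef]; linarith
    linarith [hujd, hu'jd, hup, hu'p, he1]
  have hne_neg : uj ≠ -u'j := by
    intro h
    have : uj - u'j = (2 : ℝ) • uj := by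
      rw [h]; module
    rw [this, norm_smul, Real.norm_eq_abs, hujn] at hdist
    norm_num at hdist
  -- find orthogonal point on the arc
  obtain ⟨p₀, hp₀arc, hp₀orth, hp₀n⟩ := exists_orth_on_arc hujn hu'jn hne_neg hpos hneg
  have hp₀mem : p₀ ∈ C j a := (hC j a).2.2.2 uj huj u'j hu'j hne_neg hp₀arc
  have hp₀ne : p₀ ≠ qj := by
    intro h
    rw [h, rinner, real_inner_self_eq_norm_sq, hqjn] at hp₀orth
    norm_num at hp₀orth
  exact hOPF j p₀ (mem_iUnion.mpr ⟨a, hp₀mem⟩) qj (mem_iUnion.mpr ⟨b, hqj⟩) hp₀ne hp₀orth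


end
end
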